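/- Let (Ω,σ) be a topological dynamical system, f continuous with ergodic minimizing value f̄, and assume u(ω) := - inf_{n≥1} Σ_{k=0}^{n-1}(f - f̄)(σ^k(ω)) < ∞ for all ω. Then for every minimizing measure μ (i.e., μ invariant with ∫f dμ = f̄), one has u ≥ 0 μ-almost everywhere. -/

import Mathlib

open MeasureTheory Filter Topology

noncomputable section

variable {Ω : Type*}

/-- `μ` is a `σ`-invariant Borel probability measure. -/
def IsInvProb [MeasurableSpace Ω] (σ : Ω → Ω) (μ : Measure Ω) : Prop :=
  IsProbabilityMeasure μ ∧ Measure.map σ μ = μ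

/-- Birkhoff sum `∑_{k=0}^{n-1} g(σ^k ω)`. -/
def birk (σ : Ω → Ω) (g : Ω → ℝ) (n : ℕ) (ω : Ω) : ℝ :=
  ∑ k ∈ Finset.range n, g (σ^[k] ω)

/-- The transfer function `u(ω) = - inf_{n ≥ 1} ∑_{k=0}^{n-1} (f - f̄)(σ^k ω)`. -/
def uFn (σ : Ω → Ω) (f : Ω → ℝ) (fbar : ℝ) (ω : Ω) : ℝ :=
  -(⨅ n : ℕ, birk σ (fun x => f x - fbar) (n + 1) ω)

/-- The support of a measure: points all of whose open neighborhoods have positive measure. -/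
def msupport [TopologicalSpace Ω] [MeasurableSpace Ω] (μ : Measure Ω) : Set Ω :=
  {ω | ∀ U : Set Ω, IsOpen U → ω ∈ U → 0 < μ U}

/-- `μ` is a minimizing measure for `f` with ergodic minimizing value `fbar`. -/
def IsMinimizing [MeasurableSpace Ω] (σ : Ω → Ω) (f : Ω → ℝ) (fbar : ℝ)
    (μ : Measure Ω) : Prop :=
  IsInvProb σ μ ∧ ∫ x, f x ∂μ = fbar

/-- The Mather set: union of supports of minimizing measures. -/
def MatherSet [TopologicalSpace Ω] [MeasurableSpace Ω] (σ : Ω → Ω) (f : Ω → ℝ)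
    (fbar : ℝ) : Set Ω :=
  {ω | ∃ μ : Measure Ω, IsMinimizing σ f fbar μ ∧ ω ∈ msupport μ}

/-- `fbar` is the minimum of `∫ f dμ` over invariant probability measures. -/
def IsErgMinValue [MeasurableSpace Ω] (σ : Ω → Ω) (f : Ω → ℝ) (fbar : ℝ) : Prop :=
  IsLeast {x : ℝ | ∃ μ : Measure Ω, IsInvProb σ μ ∧ ∫ w, f w ∂μ = x} fbar

lemma abs_min_sub_min_le (a b c : ℝ) : |min a c - min b c| ≤ |a - b| := by
  rcases le_total a c with h1 | h1 <;> rcases le_total b c with h2 | h2 <;>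
    simp [min_eq_left, min_eq_right, h1, h2, abs_le] <;>
    constructor <;> cases abs_le.1 (le_refl |a - b|) <;> cases abs_cases (a - b) <;> linarith

lemma birk_succ' (σ : Ω → Ω) (g : Ω → ℝ) (n : ℕ) (ω : Ω) :
    birk σ g (n + 1) ω = birk σ g n (σ ω) + g ω := by
  unfold birk
  rw [Finset.sum_range_succ']
  simp [Function.iterate_succ_apply]

section
variable (σ : Ω → Ω) (f : Ω → ℝ) (fbar : ℝ)
  (hfin : ∀ ω : Ω, BddBelow (Set.range fun n : ℕ => birk σ (fun x => f x - fbar) (n + 1) ω))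

include hfin

lemma bdd_full (ω : Ω) :
    BddBelow (Set.range fun n : ℕ => birk σ (fun x => f x - fbar) n ω) := by
  obtain ⟨c, hc⟩ := hfin ω
  refine ⟨min c 0, ?_⟩
  rintro x ⟨n, rfl⟩
  cases n with
  | zero => simpa [birk] using min_le_right c 0
  | succ n => exact (min_le_left c 0).trans (hc ⟨n, rfl⟩)

lemma uFn_key (ω : Ω) :
    uFn σ f fbar ω = max (uFn σ f fbar (σ ω)) 0 - (f ω - fbar) := by
  set g : Ω → ℝ := fun x => f x - fbar with hg
  have h1 : (⨅ n : ℕ, birk σ g (n + 1) ω) = (⨅ n : ℕ, birk σ g n (σ ω)) + g ω := by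
    simp_rw [birk_succ']
    exact (Monotone.map_ciInf_of_continuousAt (f := fun x : ℝ => x + g ω)
      (continuousAt_id.add continuousAt_const)
      (fun x y hxy => by simpa using hxy) (bdd_full σ f fbar hfin (σ ω))).symm
  have h2 : (⨅ n : ℕ, birk σ g n (σ ω))
      = min 0 (⨅ n : ℕ, birk σ g (n + 1) (σ ω)) := by
    apply le_antisymm
    · refine le_min ?_ ?_
      · exact (ciInf_le (bdd_full σ f fbar hfin (σ ω)) 0).trans (by simp [birk])
      · exact le_ciInf fun n => ciInf_le (bdd_full σ f fbar hfin (σ ω)) (n + 1)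
    · refine le_ciInf fun n => ?_
      cases n with
      | zero => simpa [birk] using min_le_left 0 _
      | succ n => exact (min_le_right _ _).trans (ciInf_le (hfin (σ ω)) n)
  show -(⨅ n : ℕ, birk σ g (n + 1) ω) = max (-(⨅ n : ℕ, birk σ g (n + 1) (σ ω))) 0 - g ω
  rw [h1, h2]
  rcases le_total (⨅ n : ℕ, birk σ g (n + 1) (σ ω)) 0 with h | h
  · rw [min_eq_right h, max_eq_left (by linarith)]; ring
  · rw [min_eq_left h, max_eq_right (by linarith)]; ring

lemma uFn_lb (ω : Ω) : -(uFn σ f fbar ω) ≤ f ω - fbar := by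
  have : (⨅ n : ℕ, birk σ (fun x => f x - fbar) (n + 1) ω) ≤ f ω - fbar := by
    simpa [birk] using ciInf_le (hfin ω) 0
  simpa [uFn] using this

end


/-- `u ≥ 0` almost everywhere for every minimizing measure. -/
theorem stmt2 [MetricSpace Ω] [CompactSpace Ω] [MeasurableSpace Ω] [BorelSpace Ω]
    (σ : Ω → Ω) (hσ : Continuous σ) (f : Ω → ℝ) (hf : Continuous f) (fbar : ℝ)
    (hfbar : IsErgMinValue σ f fbar)
    (hfin : ∀ ω : Ω, BddBelow (Set.range fun n : ℕ => birk σ (fun x => f x - fbar) (n + 1) ω))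
    (μ : Measure Ω) (hμ : IsMinimizing σ f fbar μ) :
    ∀ᵐ ω ∂μ, 0 ≤ uFn σ f fbar ω := by
  rcases isEmpty_or_nonempty Ω with hE | hNE
  · exact ae_of_all _ fun ω => (IsEmpty.false ω).elim
  obtain ⟨⟨hprob, hinv⟩, hint⟩ := hμ
  haveI := hprob
  set g : Ω → ℝ := fun x => f x - fbar with hgdef
  have hgc : Continuous g := hf.sub continuous_const
  obtain ⟨x₀, -, hx₀⟩ := isCompact_univ.exists_isMaxOn Set.univ_nonempty
    ((continuous_abs.comp hgc).continuousOn)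
  set C : ℝ := |g x₀| with hCdef
  have hC0 : 0 ≤ C := abs_nonneg _
  have hgb : ∀ x, |g x| ≤ C := fun x => hx₀ (Set.mem_univ x)
  set u : Ω → ℝ := uFn σ f fbar with hudef
  have hbc : ∀ n : ℕ, Continuous fun ω => birk σ g n ω := fun n =>
    continuous_finset_sum _ fun k _ => hgc.comp (hσ.iterate k)
  have hum : Measurable u :=
    (Measurable.iInf fun n => (hbc (n + 1)).measurable).neg
  set v : Ω → ℝ := fun x => max (u x) 0 with hvdef
  have hvm : Measurable v := hum.max measurable_const
  have hv0 : ∀ x, 0 ≤ v x := fun x => le_max_right _ _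
  set w : Ω → ℝ := fun x => max (-(u x)) 0 with hwdef
  have hwm : Measurable w := hum.neg.max measurable_const
  have hkey : ∀ x, v (σ x) = u x + g x := by
    intro x
    have h : u x = max (u (σ x)) 0 - g x := uFn_key σ f fbar hfin x
    show max (u (σ x)) 0 = u x + g x
    linarith [h]
  have hwb : ∀ x, 0 ≤ w x ∧ w x ≤ C := by
    intro x
    refine ⟨le_max_right _ _, ?_⟩
    have h1 : -(u x) ≤ g x := uFn_lb σ f fbar hfin x
    exact max_le (h1.trans ((le_abs_self _).trans (hgb x))) hC0
  have hvw : ∀ x, v x = u x + w x := by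
    intro x
    rcases le_total (u x) 0 with h | h
    · show max (u x) 0 = u x + max (-(u x)) 0
      rw [max_eq_right h, max_eq_left (by linarith)]; ring
    · show max (u x) 0 = u x + max (-(u x)) 0
      rw [max_eq_left h, max_eq_right (by linarith)]; ring
  have hvsub : ∀ x, v (σ x) - v x = g x - w x := by
    intro x; rw [hkey x, hvw x]; ring
  have hvvb : ∀ x, |v (σ x) - v x| ≤ 2 * C := by
    intro x
    rw [hvsub x]
    cases abs_cases (g x - w x) with
    | inl h => have := neg_abs_le (g x); have := le_abs_self (g x);
               rcases hwb x with ⟨h1, h2⟩; rcases h with ⟨h3, h4⟩; linarith [hgb x]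
    | inr h => have := neg_abs_le (g x); have := le_abs_self (g x);
               rcases hwb x with ⟨h1, h2⟩; rcases h with ⟨h3, h4⟩; linarith [hgb x]
  have hbint : ∀ (φ : Ω → ℝ) (D : ℝ), Measurable φ → (∀ x, |φ x| ≤ D) → Integrable φ μ :=
    fun φ D hm hb => (integrable_const D).mono' hm.aestronglyMeasurable
      (ae_of_all _ fun x => by simpa [Real.norm_eq_abs] using hb x)
  have hmap : ∀ (φ : Ω → ℝ), Measurable φ → ∫ x, φ (σ x) ∂μ = ∫ x, φ x ∂μ := by
    intro φ hm
    conv_rhs => rw [← hinv]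
    exact (integral_map hσ.aemeasurable hm.aestronglyMeasurable).symm
  set G : ℕ → Ω → ℝ := fun M x => min (v x) M with hGdef
  have hGm : ∀ M, Measurable (G M) := fun M => hvm.min measurable_const
  have hGb : ∀ (M : ℕ) (x : Ω), |G M x| ≤ M := by
    intro M x
    rw [abs_le]
    exact ⟨le_trans (by simp) (le_min (hv0 x) (Nat.cast_nonneg M)), min_le_right _ _⟩
  have hGint : ∀ M, Integrable (G M) μ := fun M => hbint _ M (hGm M) (hGb M)
  have hGσint : ∀ M, Integrable (fun x => G M (σ x)) μ := fun M =>
    hbint _ M ((hGm M).comp hσ.measurable) fun x => hGb M (σ x)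
  have hzero : ∀ M, ∫ x, (G M (σ x) - G M x) ∂μ = 0 := by
    intro M
    rw [integral_sub (hGσint M) (hGint M), hmap (G M) (hGm M), sub_self]
  have hdct : Tendsto (fun M => ∫ x, (G M (σ x) - G M x) ∂μ) atTop
      (𝓝 (∫ x, (v (σ x) - v x) ∂μ)) := by
    apply tendsto_integral_of_dominated_convergence (fun _ => 2 * C)
    · exact fun M => (((hGm M).comp hσ.measurable).sub (hGm M)).aestronglyMeasurable
    · exact integrable_const _
    · intro M
      refine ae_of_all _ fun x => ?_
      have h1 : |G M (σ x) - G M x| ≤ |v (σ x) - v x| := abs_min_sub_min_le _ _ _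
      simpa [Real.norm_eq_abs] using h1.trans (hvvb x)
    · refine ae_of_all _ fun x => ?_
      have hev : (fun M : ℕ => G M (σ x) - G M x) =ᶠ[atTop]
          (fun _ => v (σ x) - v x) := by
        filter_upwards [eventually_ge_atTop ⌈max (v x) (v (σ x))⌉₊] with M hM
        have hc : max (v x) (v (σ x)) ≤ (M : ℝ) :=
          (Nat.le_ceil _).trans (Nat.cast_le.2 hM)
        have h1 : v (σ x) ≤ (M : ℝ) := (le_max_right _ _).trans hc
        have h2 : v x ≤ (M : ℝ) := (le_max_left _ _).trans hc
        show min (v (σ x)) M - min (v x) M = v (σ x) - v x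
        rw [min_eq_left h1, min_eq_left h2]
      exact Tendsto.congr' (Filter.EventuallyEq.symm hev) tendsto_const_nhds
  have hvv : ∫ x, (v (σ x) - v x) ∂μ = 0 :=
    tendsto_nhds_unique hdct (tendsto_const_nhds.congr fun M => (hzero M).symm)
  have hfint : Integrable f μ := by
    refine hbint f (C + |fbar|) hf.measurable fun x => ?_
    have : f x = g x + fbar := by simp [hgdef]
    rw [this]
    exact (abs_add_le _ _).trans (add_le_add_left (hgb x) _)
  have hgzero : ∫ x, g x ∂μ = 0 := by
    have : ∫ x, g x ∂μ = (∫ x, f x ∂μ) - fbar := by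
      show ∫ x, (f x - fbar) ∂μ = (∫ x, f x ∂μ) - fbar
      rw [integral_sub hfint (integrable_const _), integral_const]
      simp
    rw [this, hint, sub_self]
  have hgint : Integrable g μ := hbint g C hgc.measurable hgb
  have hvσvint : Integrable (fun x => v (σ x) - v x) μ :=
    hbint _ (2 * C) ((hvm.comp hσ.measurable).sub hvm) hvvb
  have hwint : Integrable w μ :=
    hbint w C hwm fun x => by rw [abs_of_nonneg (hwb x).1]; exact (hwb x).2
  have hwzero : ∫ x, w x ∂μ = 0 := by
    have heq : ∀ x, w x = g x - (v (σ x) - v x) := fun x => by rw [hvsub x]; ring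
    calc ∫ x, w x ∂μ = ∫ x, (g x - (v (σ x) - v x)) ∂μ := by
          exact integral_congr_ae (ae_of_all _ heq)
      _ = (∫ x, g x ∂μ) - ∫ x, (v (σ x) - v x) ∂μ := integral_sub hgint hvσvint
      _ = 0 := by rw [hgzero, hvv, sub_self]
  have hae := (integral_eq_zero_iff_of_nonneg (fun x => (hwb x).1) hwint).1 hwzero
  filter_upwards [hae] with x hx
  have hx0 : w x = 0 := hx
  have := le_max_left (-(u x)) 0
  show (0 : ℝ) ≤ u x
  have hwx : max (-(u x)) 0 = 0 := hx0
  linarith [hwx ▸ this]
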